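/- arXiv:2410.16401 — 3 statements merged into one kernel-verified Lean document; each statement's English description precedes it below -/
import Mathlib

section
/- Let φ be infinitely differentiable with φ'(z) ≥ ρ1 and φ'''(z) ≥ ρ2 for all z ∈ ℝ, where ρ1, ρ2 > 0, and assume the coherence assumption with constant μ > 0. Suppose θ* satisfies f_i(θ*) = y_i and φ(θ*_j · x_i) = y_i / m for all i ∈ {1,…,n} and j ∈ {1,…,m}. Then θ* is a global minimizer of G on the zero-loss set: for every θ with f_i(θ) = y_i for all i, one has G(θ*) ≤ G(θ); moreover G(θ*) = m · Σ_{i=1}^n φ'(φ^{-1}(y_i/m))². -/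
open scoped RealInnerProductSpace
open Real Filter

noncomputable section

/-- The parameter space ℝ^{md}: m blocks θ_j ∈ ℝ^d, with the Euclidean norm. -/
abbrev Param (m d : ℕ) : Type := PiLp 2 (fun _ : Fin m => EuclideanSpace ℝ (Fin d))

/-- Network output f_i(θ) = Σ_j φ(θ_j · x_i). -/
def netF {n m d : ℕ} (φ : ℝ → ℝ) (x : Fin n → EuclideanSpace ℝ (Fin d)) (i : Fin n)
    (θ : Param m d) : ℝ := ∑ j, φ ⟪θ j, x i⟫

/-- Euclidean gradient Df_i(θ), with j-th block φ'(θ_j · x_i) x_i. -/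
def gradF {n m d : ℕ} (φ : ℝ → ℝ) (x : Fin n → EuclideanSpace ℝ (Fin d)) (i : Fin n)
    (θ : Param m d) : Param m d := WithLp.toLp 2 fun j => (deriv φ ⟪θ j, x i⟫) • x i

/-- Implicit regularizer G(θ) = Σ_i Σ_j φ'(θ_j · x_i)². -/
def regG {n m d : ℕ} (φ : ℝ → ℝ) (x : Fin n → EuclideanSpace ℝ (Fin d))
    (θ : Param m d) : ℝ := ∑ i, ∑ j, (deriv φ ⟪θ j, x i⟫) ^ 2

/-- Euclidean gradient DG(θ), with j-th block Σ_i 2 φ'(θ_j·x_i) φ''(θ_j·x_i) x_i. -/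
def gradRegG {n m d : ℕ} (φ : ℝ → ℝ) (x : Fin n → EuclideanSpace ℝ (Fin d))
    (θ : Param m d) : Param m d :=
  WithLp.toLp 2 fun j => ∑ i, (2 * deriv φ ⟪θ j, x i⟫ * deriv (deriv φ) ⟪θ j, x i⟫) • x i

/-- Squared loss L(θ) = Σ_i (f_i(θ) − y_i)². -/
def lossL {n m d : ℕ} (φ : ℝ → ℝ) (x : Fin n → EuclideanSpace ℝ (Fin d)) (y : Fin n → ℝ)
    (θ : Param m d) : ℝ := ∑ i, (netF φ x i θ - y i) ^ 2

/-- Jacobian Df(θ) : ℝ^{md} → ℝ^n, whose i-th row is Df_i(θ). -/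
def jacobian {n m d : ℕ} (φ : ℝ → ℝ) (x : Fin n → EuclideanSpace ℝ (Fin d))
    (θ : Param m d) : Param m d →ₗ[ℝ] (Fin n → ℝ) :=
  LinearMap.pi fun i => (innerSL ℝ (gradF φ x i θ)).toLinearMap

/-- Riemannian gradient ∇G(θ): orthogonal projection of DG(θ) onto ker Df(θ). -/
def rgradG {n m d : ℕ} (φ : ℝ → ℝ) (x : Fin n → EuclideanSpace ℝ (Fin d))
    (θ : Param m d) : Param m d :=
  (Submodule.orthogonalProjectionOnto (LinearMap.ker (jacobian φ x θ)) (gradRegG φ x θ) : Param m d)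
/-- a point with all pre-activations equal to φ⁻¹(y_i/m) is a global
minimizer of G on the zero-loss set, with value m·Σ_i φ'(φ⁻¹(y_i/m))². -/
theorem stmt_1
    (n m d : ℕ) (hn : 1 ≤ n) (hm : 1 ≤ m) (hd : 1 ≤ d)
    (x : Fin n → EuclideanSpace ℝ (Fin d)) (hx : ∀ i, ‖x i‖ = 1)
    (μ : ℝ) (hμ : 0 < μ)
    (hcoh : ∀ c : Fin n → ℝ, μ * ∑ i, (c i) ^ 2 ≤ ‖∑ i, c i • x i‖ ^ 2)
    (y : Fin n → ℝ)
    (φ : ℝ → ℝ) (hφ : ContDiff ℝ (⊤ : ℕ∞) φ)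
    (ρ1 ρ2 : ℝ) (hρ1 : 0 < ρ1) (hρ2 : 0 < ρ2)
    (hφ' : ∀ z, ρ1 ≤ deriv φ z)
    (hφ''' : ∀ z, ρ2 ≤ deriv (deriv (deriv φ)) z)
    (θs : Param m d)
    (hfit : ∀ i, netF φ x i θs = y i)
    (hopt : ∀ i j, φ ⟪θs j, x i⟫ = y i / (m : ℝ)) :
    (∀ θ : Param m d, (∀ i, netF φ x i θ = y i) → regG φ x θs ≤ regG φ x θ) ∧
    (∀ ν : Fin n → ℝ, (∀ i, φ (ν i) = y i / (m : ℝ)) →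
      regG φ x θs = (m : ℝ) * ∑ i, (deriv φ (ν i)) ^ 2) := by
  have hφd : Differentiable ℝ φ := hφ.differentiable (by norm_num)
  have hφ1 : ContDiff ℝ (⊤ : ℕ∞) (deriv φ) := (contDiff_infty_iff_deriv.mp hφ).2
  have hφ1d : Differentiable ℝ (deriv φ) := hφ1.differentiable (by norm_num)
  have hφ2 : ContDiff ℝ (⊤ : ℕ∞) (deriv (deriv φ)) := (contDiff_infty_iff_deriv.mp hφ1).2
  have hφ2d : Differentiable ℝ (deriv (deriv φ)) := hφ2.differentiable (by norm_num)
  have hmono2 : StrictMono (deriv (deriv φ)) :=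
    strictMono_of_deriv_pos fun z => lt_of_lt_of_le hρ2 (hφ''' z)
  have hmono : StrictMono φ := strictMono_of_deriv_pos fun z => lt_of_lt_of_le hρ1 (hφ' z)
  have hφ'pos : ∀ z, 0 < deriv φ z := fun z => lt_of_lt_of_le hρ1 (hφ' z)
  -- key pointwise inequality (tangent line of the convex function (φ')²∘φ⁻¹)
  have key : ∀ a z : ℝ,
      (deriv φ a) ^ 2 + 2 * deriv (deriv φ) a * (φ z - φ a) ≤ (deriv φ z) ^ 2 := by
    intro a z
    set c := 2 * deriv (deriv φ) a with hc
    set F : ℝ → ℝ := fun t => (deriv φ t) ^ 2 - c * φ t with hF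
    have hderiv : ∀ t, HasDerivAt F
        (2 * deriv φ t * (deriv (deriv φ) t - deriv (deriv φ) a)) t := by
      intro t
      have h1 : HasDerivAt (fun t => (deriv φ t) ^ 2)
          (2 * deriv φ t ^ 1 * deriv (deriv φ) t) t := ((hφ1d t).hasDerivAt).pow 2
      have h2 : HasDerivAt (fun t => c * φ t) (c * deriv φ t) t :=
        ((hφd t).hasDerivAt).const_mul c
      have h3 := h1.sub h2
      refine HasDerivAt.congr_deriv h3 ?_
      rw [hc]; ring
    have hFd : Differentiable ℝ F := fun t => (hderiv t).differentiableAt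
    have hderiv' : ∀ t, deriv F t
        = 2 * deriv φ t * (deriv (deriv φ) t - deriv (deriv φ) a) :=
      fun t => (hderiv t).deriv
    have hFa_le : F a ≤ F z := by
      rcases le_total a z with h | h
      · have hmonoF : MonotoneOn F (Set.Ici a) := by
          apply monotoneOn_of_deriv_nonneg (convex_Ici a) hFd.continuous.continuousOn
            (fun t _ => (hFd t).differentiableWithinAt)
          intro t ht
          rw [interior_Ici] at ht
          rw [hderiv']
          have : deriv (deriv φ) a ≤ deriv (deriv φ) t := (hmono2.le_iff_le).mpr (le_of_lt ht)
          nlinarith [hφ'pos t]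
        exact hmonoF Set.self_mem_Ici h h
      · have hantiF : AntitoneOn F (Set.Iic a) := by
          apply antitoneOn_of_deriv_nonpos (convex_Iic a) hFd.continuous.continuousOn
            (fun t _ => (hFd t).differentiableWithinAt)
          intro t ht
          rw [interior_Iic] at ht
          rw [hderiv']
          have : deriv (deriv φ) t ≤ deriv (deriv φ) a := (hmono2.le_iff_le).mpr (le_of_lt ht)
          nlinarith [hφ'pos t]
        exact hantiF h Set.self_mem_Iic h
    have : (deriv φ a) ^ 2 - c * φ a ≤ (deriv φ z) ^ 2 - c * φ z := hFa_le
    simp only [hc] at this ⊢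
    linarith
  constructor
  · intro θ hθ
    unfold regG
    apply Finset.sum_le_sum
    intro i _
    have j0 : Fin m := ⟨0, hm⟩
    set C := deriv (deriv φ) ⟪θs j0, x i⟫ with hC
    have heq : ∀ j : Fin m, ⟪θs j, x i⟫ = ⟪θs j0, x i⟫ := fun j =>
      hmono.injective (by rw [hopt i j, hopt i j0])
    have hstep : ∀ j : Fin m,
        (deriv φ ⟪θs j, x i⟫) ^ 2 + 2 * C * (φ ⟪θ j, x i⟫ - φ ⟪θs j, x i⟫)
          ≤ (deriv φ ⟪θ j, x i⟫) ^ 2 := by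
      intro j
      rw [heq j, hC]
      exact key _ _
    have hsum := Finset.sum_le_sum (fun j (_ : j ∈ Finset.univ) => hstep j)
    have hzero : ∑ j : Fin m, 2 * C * (φ ⟪θ j, x i⟫ - φ ⟪θs j, x i⟫) = 0 := by
      rw [← Finset.mul_sum, Finset.sum_sub_distrib]
      have h1 : ∑ j : Fin m, φ ⟪θ j, x i⟫ = y i := hθ i
      have h2 : ∑ j : Fin m, φ ⟪θs j, x i⟫ = y i := hfit i
      rw [h1, h2]; ring
    rw [Finset.sum_add_distrib, hzero, add_zero] at hsum
    exact hsum
  · intro ν hν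
    unfold regG
    have heq : ∀ i (j : Fin m), ⟪θs j, x i⟫ = ν i := fun i j =>
      hmono.injective (by rw [hopt i j, hν i])
    calc ∑ i, ∑ j : Fin m, (deriv φ ⟪θs j, x i⟫) ^ 2
        = ∑ i, ∑ _j : Fin m, (deriv φ (ν i)) ^ 2 := by
          refine Finset.sum_congr rfl fun i _ => Finset.sum_congr rfl fun j _ => ?_
          rw [heq i j]
      _ = (m : ℝ) * ∑ i, (deriv φ (ν i)) ^ 2 := by
          simp [Finset.sum_const, Finset.mul_sum]
end
end

section
/- Suppose φ'(z) > 0 for all z ∈ ℝ and x_1, …, x_n are linearly independent. Then for every θ ∈ ℝ^{md}: (a) the Euclidean gradients Df_1(θ), …, Df_n(θ) ∈ ℝ^{md} are linearly independent, equivalently the Jacobian Df(θ) : ℝ^{md} → ℝ^n is surjective; and (b) the linear span of {Df_1(θ), …, Df_n(θ)} equals the orthogonal complement of ker Df(θ). -/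
open scoped RealInnerProductSpace
open Real Filter

noncomputable section

/-- if φ' > 0 and the data are linearly independent, the gradients
Df_i(θ) are linearly independent (the Jacobian is surjective), and their span is
the orthogonal complement of ker Df(θ). -/
theorem stmt_2
    (n m d : ℕ) (hn : 1 ≤ n) (hm : 1 ≤ m) (hd : 1 ≤ d)
    (x : Fin n → EuclideanSpace ℝ (Fin d)) (hx : ∀ i, ‖x i‖ = 1)
    (hlin : LinearIndependent ℝ x)
    (φ : ℝ → ℝ) (hφ : ContDiff ℝ (⊤ : ℕ∞) φ)
    (hφ' : ∀ z, 0 < deriv φ z)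
    (θ : Param m d) :
    LinearIndependent ℝ (fun i => gradF φ x i θ) ∧
    Function.Surjective (jacobian φ x θ) ∧
    Submodule.span ℝ (Set.range fun i => gradF φ x i θ)
      = (LinearMap.ker (jacobian φ x θ))ᗮ := by
  classical
  set g : Fin n → Param m d := fun i => gradF φ x i θ with hg
  -- linear independence
  have hli : LinearIndependent ℝ g := by
    rw [Fintype.linearIndependent_iff]
    intro a ha i
    set j : Fin m := ⟨0, hm⟩
    set P : Param m d →ₗ[ℝ] EuclideanSpace ℝ (Fin d) :=
      (LinearMap.proj j).comp
        (WithLp.linearEquiv 2 ℝ (∀ _ : Fin m, EuclideanSpace ℝ (Fin d))).toLinearMap with hP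
    have hj : ∑ k, (a k * deriv φ ⟪θ j, x k⟫) • x k = 0 := by
      have h := congrArg P ha
      rw [map_sum, map_zero] at h
      have hPk : ∀ k, P (a k • g k) = (a k * deriv φ ⟪θ j, x k⟫) • x k := by
        intro k
        rw [map_smul]
        have hgk : P (g k) = (deriv φ ⟪θ j, x k⟫) • x k := by simp [P, g, gradF]
        rw [hgk, smul_smul]
      rwa [Finset.sum_congr rfl (fun k _ => hPk k)] at h
    have := Fintype.linearIndependent_iff.mp hlin _ hj i
    have hpos := hφ' ⟪θ j, x i⟫
    nlinarith [this]
  -- kernel = orthogonal of span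
  have hker : LinearMap.ker (jacobian φ x θ)
      = (Submodule.span ℝ (Set.range g))ᗮ := by
    ext v
    constructor
    · intro hv
      rw [Submodule.mem_orthogonal]
      intro u hu
      refine Submodule.span_induction ?_ ?_ ?_ ?_ hu
      · rintro _ ⟨i, rfl⟩
        have := congrFun hv i
        simpa [jacobian] using this
      · simp
      · intro a b _ _ ha hb; rw [inner_add_left, ha, hb, add_zero]
      · intro c a _ ha; rw [real_inner_smul_left, ha, mul_zero]
    · intro hv
      rw [LinearMap.mem_ker]
      funext i
      simp only [jacobian, LinearMap.pi_apply, ContinuousLinearMap.coe_coe, innerSL_apply_apply,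
        Pi.zero_apply]
      exact (Submodule.mem_orthogonal _ v).mp hv (g i)
        (Submodule.subset_span ⟨i, rfl⟩)
  -- surjectivity
  have hsurj : Function.Surjective (jacobian φ x θ) := by
    set T : (Fin n → ℝ) →ₗ[ℝ] (Fin n → ℝ) :=
      (jacobian φ x θ) ∘ₗ (Fintype.linearCombination ℝ g)
    have hTinj : Function.Injective T := by
      rw [← LinearMap.ker_eq_bot, LinearMap.ker_eq_bot']
      intro a ha
      have hcomp : ∀ i, ⟪g i, ∑ k, a k • g k⟫ = 0 := by
        intro i
        have h := congrFun ha i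
        rw [Pi.zero_apply] at h
        rw [show T a i = ⟪g i, ∑ k, a k • g k⟫ by
          simp only [T, LinearMap.comp_apply, Fintype.linearCombination_apply, jacobian,
            LinearMap.pi_apply, ContinuousLinearMap.coe_coe, innerSL_apply_apply]; rfl] at h
        exact h
      have hz : ∑ k, a k • g k = 0 := by
        have h0 : ⟪∑ k, a k • g k, ∑ k, a k • g k⟫ = 0 := by
          rw [sum_inner]
          simp only [real_inner_smul_left]
          simp [hcomp]
        exact inner_self_eq_zero.mp h0
      funext i
      exact Fintype.linearIndependent_iff.mp hli a hz i
    have hTsurj : Function.Surjective T :=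
      (LinearMap.injective_iff_surjective).mp hTinj
    exact Function.Surjective.of_comp hTsurj
  refine ⟨hli, hsurj, ?_⟩
  rw [hker, Submodule.orthogonal_orthogonal]
end
end

section
/- Assume the coherence assumption with constant μ > 0 and φ'(z) ≥ ρ1 > 0 for all z ∈ ℝ, and set C = 4 m μ ρ1². Let θ̄ : [0, ∞) → ℝ^{md} be differentiable with θ̄'(t) = −DL(θ̄(t)) for all t ≥ 0. Then for all 0 ≤ s ≤ t: ‖θ̄(t) − θ̄(s)‖ ≤ (2/√C) · (√(L(θ̄(s))) − √(L(θ̄(t)))); in particular ‖θ̄(t) − θ̄(s)‖ ≤ (2/√C) · √(L(θ̄(s))). -/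
open scoped RealInnerProductSpace
open Real Filter

noncomputable section

def gradL {n m d : ℕ} (φ : ℝ → ℝ) (x : Fin n → EuclideanSpace ℝ (Fin d)) (y : Fin n → ℝ)
    (θ : Param m d) : Param m d :=
  WithLp.toLp 2 fun j => ∑ i, (2 * (netF φ x i θ - y i) * deriv φ ⟪θ j, x i⟫) • x i

theorem hasGradL {n m d : ℕ} (φ : ℝ → ℝ) (hφ : ContDiff ℝ (⊤ : ℕ∞) φ)
    (x : Fin n → EuclideanSpace ℝ (Fin d)) (y : Fin n → ℝ) (θ : Param m d) :
    HasGradientAt (lossL φ x y) (gradL φ x y θ) θ := by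
  have hφd : Differentiable ℝ φ := hφ.differentiable (by norm_num)
  have h1 : ∀ (j : Fin m) (i : Fin n),
      HasFDerivAt (fun θ : Param m d => (⟪θ j, x i⟫ : ℝ))
        ((innerSL ℝ (x i)).comp (PiLp.proj 2 _ j)) θ := by
    intro j i
    have := ((innerSL ℝ (x i)).comp (PiLp.proj 2 (fun _ : Fin m => EuclideanSpace ℝ (Fin d)) j)).hasFDerivAt (x := θ)
    convert this using 2 with θ'
    simp only [ContinuousLinearMap.coe_comp', Function.comp_apply, PiLp.proj_apply, innerSL_apply_apply]
    exact real_inner_comm _ _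
  have h2 : ∀ (j : Fin m) (i : Fin n),
      HasFDerivAt (fun θ : Param m d => φ ⟪θ j, x i⟫)
        ((deriv φ ⟪θ j, x i⟫) • ((innerSL ℝ (x i)).comp (PiLp.proj 2 _ j))) θ :=
    fun j i => ((hφd _).hasDerivAt.comp_hasFDerivAt θ (h1 j i))
  have h3 : ∀ i, HasFDerivAt (netF φ x i)
      (∑ j, (deriv φ ⟪θ j, x i⟫) • ((innerSL ℝ (x i)).comp (PiLp.proj 2 (fun _ : Fin m => EuclideanSpace ℝ (Fin d)) j))) θ :=
    fun i => HasFDerivAt.fun_sum (fun j _ => h2 j i)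
  have h4 : HasFDerivAt (lossL φ x y)
      (∑ i, (((2:ℕ):ℝ) * (netF φ x i θ - y i) ^ 1) •
        (∑ j, (deriv φ ⟪θ j, x i⟫) • ((innerSL ℝ (x i)).comp (PiLp.proj 2 (fun _ : Fin m => EuclideanSpace ℝ (Fin d)) j)))) θ :=
    HasFDerivAt.fun_sum (fun i _ =>
      by exact ((hasDerivAt_pow 2 (netF φ x i θ - y i)).comp_hasFDerivAt θ ((h3 i).sub_const (y i))))
  rw [hasGradientAt_iff_hasFDerivAt]
  refine h4.congr_fderiv (Eq.symm ?_)
  ext v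
  have key : ∀ (w : EuclideanSpace ℝ (Fin d)) (c : Fin n → ℝ),
      (⟪(∑ i, c i • x i : EuclideanSpace ℝ (Fin d)), w⟫ : ℝ) = ∑ i, c i * ⟪x i, w⟫ := by
    intro w c
    rw [sum_inner]
    exact Finset.sum_congr rfl fun i _ => real_inner_smul_left _ _ _
  have lhs : (InnerProductSpace.toDual ℝ (Param m d) (gradL φ x y θ)) v
      = ∑ j, ∑ i, (2 * (netF φ x i θ - y i) * deriv φ ⟪θ j, x i⟫) * ⟪x i, v j⟫ := by
    rw [InnerProductSpace.toDual_apply_apply, PiLp.inner_apply]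
    exact Finset.sum_congr rfl fun j _ => key (v j) _
  rw [lhs]
  simp only [ContinuousLinearMap.sum_apply, ContinuousLinearMap.smul_apply,
    ContinuousLinearMap.coe_comp', Function.comp_apply, PiLp.proj_apply,
    innerSL_apply_apply, smul_eq_mul, pow_one, Nat.cast_ofNat, Finset.mul_sum]
  rw [Finset.sum_comm]
  exact Finset.sum_congr rfl fun i _ => Finset.sum_congr rfl fun j _ => by ring

theorem lossL_nonneg {n m d : ℕ} (φ : ℝ → ℝ) (x : Fin n → EuclideanSpace ℝ (Fin d))
    (y : Fin n → ℝ) (θ : Param m d) : 0 ≤ lossL φ x y θ :=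
  Finset.sum_nonneg fun _ _ => sq_nonneg _

theorem regG_nonneg {n m d : ℕ} (φ : ℝ → ℝ) (x : Fin n → EuclideanSpace ℝ (Fin d))
    (θ : Param m d) : 0 ≤ regG φ x θ :=
  Finset.sum_nonneg fun _ _ => Finset.sum_nonneg fun _ _ => sq_nonneg _

theorem pl_ineq {n m d : ℕ} (φ : ℝ → ℝ) (x : Fin n → EuclideanSpace ℝ (Fin d))
    (y : Fin n → ℝ) (μ ρ1 : ℝ) (hμ : 0 < μ) (hρ1 : 0 < ρ1)
    (hcoh : ∀ c : Fin n → ℝ, μ * ∑ i, (c i) ^ 2 ≤ ‖∑ i, c i • x i‖ ^ 2)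
    (hφ' : ∀ z, ρ1 ≤ deriv φ z) (θ : Param m d) :
    (4 * (m:ℝ) * μ * ρ1 ^ 2) * lossL φ x y θ ≤ ‖gradL φ x y θ‖ ^ 2 := by
  rw [PiLp.norm_sq_eq_of_L2]
  have block : ∀ j : Fin m, 4 * μ * ρ1 ^ 2 * lossL φ x y θ ≤ ‖gradL φ x y θ j‖ ^ 2 := by
    intro j
    have h2 : 4 * ρ1 ^ 2 * lossL φ x y θ
        ≤ ∑ i, (2 * (netF φ x i θ - y i) * deriv φ ⟪θ j, x i⟫) ^ 2 := by
      rw [lossL, Finset.mul_sum]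
      refine Finset.sum_le_sum fun i _ => ?_
      have h3 : ρ1 ^ 2 ≤ (deriv φ ⟪θ j, x i⟫) ^ 2 := by nlinarith [hφ' ⟪θ j, x i⟫]
      nlinarith [sq_nonneg (netF φ x i θ - y i)]
    calc 4 * μ * ρ1 ^ 2 * lossL φ x y θ = μ * (4 * ρ1 ^ 2 * lossL φ x y θ) := by ring
      _ ≤ μ * ∑ i, (2 * (netF φ x i θ - y i) * deriv φ ⟪θ j, x i⟫) ^ 2 :=
          mul_le_mul_of_nonneg_left h2 hμ.le
      _ ≤ ‖∑ i, (2 * (netF φ x i θ - y i) * deriv φ ⟪θ j, x i⟫) • x i‖ ^ 2 := hcoh _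
      _ = ‖gradL φ x y θ j‖ ^ 2 := rfl
  calc (4 * (m:ℝ) * μ * ρ1 ^ 2) * lossL φ x y θ
      = ∑ _j : Fin m, 4 * μ * ρ1 ^ 2 * lossL φ x y θ := by
        simp [Finset.sum_const, Finset.card_univ]; ring
    _ ≤ ∑ j, ‖gradL φ x y θ j‖ ^ 2 := Finset.sum_le_sum fun j _ => block j

theorem gradL_le {n m d : ℕ} (φ : ℝ → ℝ) (x : Fin n → EuclideanSpace ℝ (Fin d))
    (hx : ∀ i, ‖x i‖ = 1) (y : Fin n → ℝ) (θ : Param m d) :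
    ‖gradL φ x y θ‖ ≤ 2 * Real.sqrt (regG φ x θ) * Real.sqrt (lossL φ x y θ) := by
  have hsq : ‖gradL φ x y θ‖ ^ 2 ≤ 4 * lossL φ x y θ * regG φ x θ := by
    rw [PiLp.norm_sq_eq_of_L2]
    have block : ∀ j : Fin m, ‖gradL φ x y θ j‖ ^ 2
        ≤ 4 * lossL φ x y θ * ∑ i, (deriv φ ⟪θ j, x i⟫) ^ 2 := by
      intro j
      have h1 : ‖gradL φ x y θ j‖ ≤ ∑ i, 2 * (|netF φ x i θ - y i| * |deriv φ ⟪θ j, x i⟫|) := by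
        refine (norm_sum_le (E := EuclideanSpace ℝ (Fin d)) _ _).trans (Finset.sum_le_sum fun i _ => ?_)
        rw [norm_smul, hx i, mul_one]
        simp [abs_mul]
        ring_nf
        exact le_refl _
      have h2 : (∑ i, |netF φ x i θ - y i| * |deriv φ ⟪θ j, x i⟫|) ^ 2
          ≤ (∑ i, |netF φ x i θ - y i| ^ 2) * ∑ i, |deriv φ ⟪θ j, x i⟫| ^ 2 :=
        Finset.sum_mul_sq_le_sq_mul_sq Finset.univ _ _
      have hnn : (0:ℝ) ≤ ∑ i, 2 * (|netF φ x i θ - y i| * |deriv φ ⟪θ j, x i⟫|) :=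
        Finset.sum_nonneg fun i _ => by positivity
      calc ‖gradL φ x y θ j‖ ^ 2
          ≤ (∑ i, 2 * (|netF φ x i θ - y i| * |deriv φ ⟪θ j, x i⟫|)) ^ 2 :=
            pow_le_pow_left₀ (norm_nonneg _) h1 2
        _ = 4 * (∑ i, |netF φ x i θ - y i| * |deriv φ ⟪θ j, x i⟫|) ^ 2 := by
            rw [← Finset.mul_sum]; ring
        _ ≤ 4 * ((∑ i, |netF φ x i θ - y i| ^ 2) * ∑ i, |deriv φ ⟪θ j, x i⟫| ^ 2) := by
            linarith
        _ = 4 * lossL φ x y θ * ∑ i, (deriv φ ⟪θ j, x i⟫) ^ 2 := by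
            simp only [sq_abs]; rw [lossL]; ring
    calc ∑ j, ‖gradL φ x y θ j‖ ^ 2
        ≤ ∑ j, 4 * lossL φ x y θ * ∑ i, (deriv φ ⟪θ j, x i⟫) ^ 2 :=
          Finset.sum_le_sum fun j _ => block j
      _ = 4 * lossL φ x y θ * regG φ x θ := by
          rw [← Finset.mul_sum, regG, Finset.sum_comm]
  have h4 : ‖gradL φ x y θ‖ = Real.sqrt (‖gradL φ x y θ‖ ^ 2) :=
    (Real.sqrt_sq (norm_nonneg _)).symm
  rw [h4]
  calc Real.sqrt (‖gradL φ x y θ‖ ^ 2) ≤ Real.sqrt (4 * lossL φ x y θ * regG φ x θ) :=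
      Real.sqrt_le_sqrt hsq
    _ = 2 * Real.sqrt (regG φ x θ) * Real.sqrt (lossL φ x y θ) := by
      rw [show 4 * lossL φ x y θ * regG φ x θ = (2:ℝ)^2 * (regG φ x θ * lossL φ x y θ) by ring,
        Real.sqrt_mul (by positivity), Real.sqrt_sq (by norm_num),
        Real.sqrt_mul (regG_nonneg φ x θ)]
      ring

theorem arith_key (a b C M ε : ℝ) (ha : 0 ≤ a) (hb : 0 ≤ b) (hC : 0 < C) (hM : 0 ≤ M)
    (hε : 0 < ε) (h1 : C * b ≤ a ^ 2) (h2 : a ≤ 2 * M * Real.sqrt b) :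
    a ≤ a ^ 2 / (Real.sqrt C * Real.sqrt (b + ε)) + 2 * M * Real.sqrt ε := by
  set sb := Real.sqrt b with hsb
  set se := Real.sqrt ε with hse
  set sC := Real.sqrt C with hsC
  set sbe := Real.sqrt (b + ε) with hsbe
  have hsbe0 : 0 < sbe := Real.sqrt_pos.2 (by linarith)
  have hsC0 : 0 < sC := Real.sqrt_pos.2 hC
  have hsb0 : 0 ≤ sb := Real.sqrt_nonneg _
  have hse0 : 0 ≤ se := Real.sqrt_nonneg _
  have h1' : sC * sb ≤ a := by
    have : Real.sqrt (C * b) ≤ Real.sqrt (a ^ 2) := Real.sqrt_le_sqrt h1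
    rwa [Real.sqrt_mul hC.le, Real.sqrt_sq ha] at this
  have hmono : sb ≤ sbe := Real.sqrt_le_sqrt (by linarith)
  have hdiff : sbe ≤ sb + se := by
    have h3 : b + ε ≤ (sb + se) ^ 2 := by
      have hb2 : sb ^ 2 = b := Real.sq_sqrt hb
      have he2 : se ^ 2 = ε := Real.sq_sqrt hε.le
      nlinarith [mul_nonneg hsb0 hse0]
    calc sbe ≤ Real.sqrt ((sb + se) ^ 2) := Real.sqrt_le_sqrt h3
      _ = sb + se := Real.sqrt_sq (by linarith)
  have h2' : a ≤ 2 * M * sbe := h2.trans (by nlinarith)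
  have hpos : 0 < sC * sbe := mul_pos hsC0 hsbe0
  rw [div_add' _ _ _ (ne_of_gt hpos), le_div_iff₀ hpos]
  nlinarith [mul_le_mul_of_nonneg_left h1' ha, mul_le_mul h2' (by linarith : sbe - sb ≤ se)
    (by linarith) (by linarith : (0:ℝ) ≤ 2 * M * sbe), mul_nonneg (mul_nonneg ha hsC0.le) (by linarith : (0:ℝ) ≤ sbe - sb), hsC0.le]


set_option maxHeartbeats 4000000 in
set_option synthInstance.maxHeartbeats 1000000 in
/-- path-length bound for the Euclidean gradient flow of the loss:
‖θ̄(t) − θ̄(s)‖ ≤ (2/√C)(√L(θ̄(s)) − √L(θ̄(t))) ≤ (2/√C)√L(θ̄(s)) for 0 ≤ s ≤ t. -/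
theorem stmt_11
    (n m d : ℕ) (hn : 1 ≤ n) (hm : 1 ≤ m) (hd : 1 ≤ d)
    (x : Fin n → EuclideanSpace ℝ (Fin d)) (hx : ∀ i, ‖x i‖ = 1)
    (μ : ℝ) (hμ : 0 < μ)
    (hcoh : ∀ c : Fin n → ℝ, μ * ∑ i, (c i) ^ 2 ≤ ‖∑ i, c i • x i‖ ^ 2)
    (y : Fin n → ℝ)
    (φ : ℝ → ℝ) (hφ : ContDiff ℝ (⊤ : ℕ∞) φ)
    (ρ1 : ℝ) (hρ1 : 0 < ρ1)
    (hφ' : ∀ z, ρ1 ≤ deriv φ z)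
    (C : ℝ) (hC : C = 4 * (m : ℝ) * μ * ρ1 ^ 2)
    (θb : ℝ → Param m d)
    (hflow : ∀ t, 0 ≤ t → HasDerivAt θb (-(gradient (lossL φ x y) (θb t))) t) :
    ∀ s t, 0 ≤ s → s ≤ t →
      ‖θb t - θb s‖
          ≤ (2 / Real.sqrt C) *
            (Real.sqrt (lossL φ x y (θb s)) - Real.sqrt (lossL φ x y (θb t))) ∧
      ‖θb t - θb s‖ ≤ (2 / Real.sqrt C) * Real.sqrt (lossL φ x y (θb s)) := by
  intro s t hs hst
  have hm1 : (1:ℝ) ≤ (m:ℝ) := by exact_mod_cast hm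
  have hm0 : (0:ℝ) < (m:ℝ) := by exact_mod_cast Nat.lt_of_lt_of_le Nat.zero_lt_one hm
  have hCpos : 0 < C := by
    rw [hC]; nlinarith [mul_pos hm0 (mul_pos hμ (pow_pos hρ1 2))]
  have hsC0 : 0 < Real.sqrt C := Real.sqrt_pos.2 hCpos
  have hgrad : ∀ θ : Param m d, gradient (lossL φ x y) θ = gradL φ x y θ :=
    fun θ => (hasGradL φ hφ x y θ).gradient
  have hflow' : ∀ τ, 0 ≤ τ → HasDerivAt θb (-(gradL φ x y (θb τ))) τ := by
    intro τ hτ; rw [← hgrad]; exact hflow τ hτ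
  have hθc : ContinuousOn θb (Set.Icc s t) := fun τ hτ =>
    ((hflow' τ (hs.trans hτ.1)).continuousAt).continuousWithinAt
  -- derivative of L ∘ θb
  have hLd : ∀ τ, 0 ≤ τ → HasDerivAt (fun u => lossL φ x y (θb u))
      (-‖gradL φ x y (θb τ)‖ ^ 2) τ := by
    intro τ hτ
    have h1 : HasFDerivAt (lossL φ x y)
        (InnerProductSpace.toDual ℝ (Param m d) (gradL φ x y (θb τ))) (θb τ) :=
      (hasGradientAt_iff_hasFDerivAt).1 (hasGradL φ hφ x y (θb τ))
    have h2 := h1.comp_hasDerivAt τ (hflow' τ hτ)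
    refine h2.congr_deriv (Eq.symm ?_)
    rw [InnerProductSpace.toDual_apply_apply, inner_neg_right, real_inner_self_eq_norm_sq]
  -- continuity of regG and lossL
  have hinnerc : ∀ (j : Fin m) (i : Fin n),
      Continuous (fun θ : Param m d => (⟪θ j, x i⟫ : ℝ)) := fun j i =>
    Continuous.inner (PiLp.continuous_apply (p := 2) (β := fun _ : Fin m => EuclideanSpace ℝ (Fin d)) j) continuous_const
  have hderivc : Continuous (deriv φ) := hφ.continuous_deriv (mod_cast le_top)
  have hregc : Continuous (fun θ : Param m d => regG φ x θ) := by
    unfold regG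
    exact continuous_finset_sum _ fun i _ => continuous_finset_sum _ fun j _ =>
      ((hderivc.comp (hinnerc j i)).pow 2)
  have hLc : Continuous (fun θ : Param m d => lossL φ x y θ) := by
    have hdiff : Differentiable ℝ (fun θ : Param m d => lossL φ x y θ) :=
      fun θ => (hasGradL φ hφ x y θ).differentiableAt
    exact hdiff.continuous
  -- bound M on sqrt (regG) along the path
  obtain ⟨τ0, hτ0mem, hmax⟩ := isCompact_Icc.exists_isMaxOn (Set.nonempty_Icc.2 hst)
    ((Real.continuous_sqrt.comp hregc).comp_continuousOn hθc)
  set M := Real.sqrt (regG φ x (θb τ0)) with hMdef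
  have hM0 : 0 ≤ M := Real.sqrt_nonneg _
  have hM : ∀ τ ∈ Set.Icc s t, Real.sqrt (regG φ x (θb τ)) ≤ M := fun τ hτ => hmax hτ
  set L : Param m d → ℝ := lossL φ x y with hLdef
  -- main per-ε estimate
  have key : ∀ ε : ℝ, 0 < ε → ‖θb t - θb s‖
      ≤ (2 / Real.sqrt C) * (Real.sqrt (L (θb s) + ε) - Real.sqrt (L (θb t) + ε))
        + 2 * M * Real.sqrt ε * (t - s) := by
    intro ε hε
    set B : ℝ → ℝ := fun τ => (2 / Real.sqrt C) * (Real.sqrt (L (θb s) + ε)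
        - Real.sqrt (L (θb τ) + ε)) + 2 * M * Real.sqrt ε * (τ - s) with hBdef
    set B' : ℝ → ℝ := fun τ => ‖gradL φ x y (θb τ)‖ ^ 2
        / (Real.sqrt C * Real.sqrt (L (θb τ) + ε)) + 2 * M * Real.sqrt ε with hB'def
    have hBd : ∀ τ, 0 ≤ τ → HasDerivAt B (B' τ) τ := by
      intro τ hτ
      have hne : L (θb τ) + ε ≠ 0 := by
        have := lossL_nonneg φ x y (θb τ); rw [hLdef]; positivity
      have h1 : HasDerivAt (fun u => Real.sqrt (L (θb u) + ε))
          ((-‖gradL φ x y (θb τ)‖ ^ 2) / (2 * Real.sqrt (L (θb τ) + ε))) τ :=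
        ((hLd τ hτ).add_const ε).sqrt hne
      have h2 := ((h1.const_sub (Real.sqrt (L (θb s) + ε))).const_mul (2 / Real.sqrt C)).add
        (((hasDerivAt_id τ).sub_const s).const_mul (2 * M * Real.sqrt ε))
      refine h2.congr_deriv (Eq.symm ?_)
      have hsqrtpos : 0 < Real.sqrt (L (θb τ) + ε) := Real.sqrt_pos.2 (by
        have := lossL_nonneg φ x y (θb τ); rw [hLdef]; positivity)
      rw [hB'def]
      field_simp
    have hfd : ∀ τ ∈ Set.Ico s t, HasDerivWithinAt (fun u => θb u - θb s)
        (-(gradL φ x y (θb τ))) (Set.Ici τ) τ := fun τ hτ =>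
      (((hflow' τ (hs.trans hτ.1)).sub_const (θb s)).hasDerivWithinAt)
    have hBd' : ∀ τ ∈ Set.Ico s t, HasDerivWithinAt B (B' τ) (Set.Ici τ) τ := fun τ hτ =>
      (hBd τ (hs.trans hτ.1)).hasDerivWithinAt
    have hBc : ContinuousOn B (Set.Icc s t) := by
      refine ContinuousOn.add (ContinuousOn.mul continuousOn_const ?_)
        (Continuous.continuousOn (by continuity))
      exact ContinuousOn.sub continuousOn_const
        (Real.continuous_sqrt.comp_continuousOn
          (((hLc.comp_continuousOn hθc)).add continuousOn_const))
    have hstart : ‖θb s - θb s‖ ≤ B s := by simp [hBdef]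
    have bound : ∀ τ ∈ Set.Ico s t, ‖-(gradL φ x y (θb τ))‖ ≤ B' τ := by
      intro τ hτ
      rw [norm_neg, hB'def]
      have hτ' : τ ∈ Set.Icc s t := Set.mem_Icc_of_Ico hτ
      have hpl := pl_ineq φ x y μ ρ1 hμ hρ1 hcoh hφ' (θb τ)
      have hub : ‖gradL φ x y (θb τ)‖ ≤ 2 * M * Real.sqrt (L (θb τ)) := by
        refine (gradL_le φ x hx y (θb τ)).trans ?_
        have := hM τ hτ'
        have h0 := Real.sqrt_nonneg (L (θb τ))
        nlinarith
      have := arith_key ‖gradL φ x y (θb τ)‖ (L (θb τ)) C M ε (norm_nonneg _)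
        (lossL_nonneg φ x y (θb τ)) hCpos hM0 hε (by rw [hC]; exact hpl) hub
      exact this
    have := image_norm_le_of_norm_deriv_right_le_deriv_boundary'
      (hθc.sub continuousOn_const) hfd hstart hBc hBd' bound (Set.right_mem_Icc.2 hst)
    simpa [hBdef] using this
  -- limit ε → 0⁺
  have hfirst : ‖θb t - θb s‖
      ≤ (2 / Real.sqrt C) * (Real.sqrt (L (θb s)) - Real.sqrt (L (θb t))) := by
    have hcont : Continuous (fun ε : ℝ => (2 / Real.sqrt C)
        * (Real.sqrt (L (θb s) + ε) - Real.sqrt (L (θb t) + ε))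
        + 2 * M * Real.sqrt ε * (t - s)) := by continuity
    have hT : Tendsto (fun ε : ℝ => (2 / Real.sqrt C)
        * (Real.sqrt (L (θb s) + ε) - Real.sqrt (L (θb t) + ε))
        + 2 * M * Real.sqrt ε * (t - s)) (nhdsWithin 0 (Set.Ioi 0))
        (nhds ((2 / Real.sqrt C) * (Real.sqrt (L (θb s)) - Real.sqrt (L (θb t))))) :=
      (hcont.tendsto' 0 _ (by simp)).mono_left nhdsWithin_le_nhds
    refine ge_of_tendsto hT ?_
    filter_upwards [self_mem_nhdsWithin] with ε hε
    exact key ε hε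
  refine ⟨hfirst, hfirst.trans ?_⟩
  have h1 : 0 ≤ Real.sqrt (L (θb t)) := Real.sqrt_nonneg _
  have h2 : 0 ≤ 2 / Real.sqrt C := by positivity
  nlinarith
end
end
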